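/- (Invariant of iterative sampling.) Consider a hitting-set instance with sets S_1,…,S_N ⊆ {1,…,n}, weights w_i ≥ 0 not all zero, p ∈ (0, 1/2], Δ = max_i |S_i| ≥ 1, T = ⌈8pΔ⌉, q = 4p/T, τ = ∑_i w_i·e^{−|S_i|p}. Fix t with 2 ≤ t ≤ T and fixed subsets H^1,…,H^{t−1} ⊆ {1,…,n}. Let G^t = {j : X^t_j = 1}, where X^t_1,…,X^t_n are pairwise independent {0,1}-valued random variables with P(X^t_j = 1) = q. Then E[f^t(G^t)] ≤ f^{t−1}(H^{t−1}), where for a subset G ⊆ {1,…,n} with indicators X_j = 1[j∈G] and Y_i(G) = ∑_{j∈S_i} X_j − ∑_{j<k, j,k∈S_i} X_j X_k, one defines f^s(G) = (∑_{i : S_i ∩ (H^1∪⋯∪H^{s−1}) = ∅} (1 − Y_i(G))·w_i·e^{−|S_i|(T−s)p/T})/τ + (|G| + ∑_{j=1}^{s−1}|H^j| + 4n(T−s)p/T)/(4np). -/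

import Mathlib

open MeasureTheory ProbabilityTheory

open Classical in
/-- The value `f^t(G)` of the paper, written in terms of the indicator values
`X j = 1[j ∈ G]` of the set `G` (so `|G| = ∑_j X j` and
`Y_i(G) = ∑_{j∈S_i} X_j − ∑_{j<l ∈ S_i} X_j X_l`). -/
noncomputable def fGen {n N : ℕ} (S : Fin N → Finset (Fin n)) (w : Fin N → ℝ)
    (p τ : ℝ) (T t : ℕ) (H : ℕ → Finset (Fin n)) (X : Fin n → ℝ) : ℝ :=
  (∑ i ∈ Finset.univ.filter (fun i => ∀ j ∈ Finset.Icc 1 (t - 1), S i ∩ H j = ∅),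
      (1 - (∑ j ∈ S i, X j - ∑ j ∈ S i, ∑ l ∈ (S i).filter (fun l => j < l), X j * X l)) *
        w i * Real.exp (-((S i).card : ℝ) * ((T - t : ℕ) : ℝ) * p / (T : ℝ))) / τ +
    ((∑ j, X j) + (∑ j ∈ Finset.Icc 1 (t - 1), ((H j).card : ℝ)) +
        4 * (n : ℝ) * ((T - t : ℕ) : ℝ) * p / (T : ℝ)) / (4 * (n : ℝ) * p)

/-- The indicator function of a finite set `G ⊆ {1,…,n}`. -/
noncomputable def indic {n : ℕ} (G : Finset (Fin n)) : Fin n → ℝ :=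
  fun j => if j ∈ G then 1 else 0

lemma pair_ub {α : Type*} [LinearOrder α] (S : Finset α) :
    2 * ∑ j ∈ S, (S.filter (fun l => j < l)).card ≤ S.card ^ 2 := by
  classical
  have h1 : ∑ j ∈ S, (S.filter (fun l => j < l)).card
      = ∑ j ∈ S, ∑ l ∈ S, if j < l then 1 else 0 := by
    refine Finset.sum_congr rfl fun j _ => ?_
    rw [Finset.card_filter]
  have h2 : ∑ j ∈ S, ∑ l ∈ S, (if j < l then 1 else 0)
      = ∑ j ∈ S, ∑ l ∈ S, (if l < j then 1 else 0) := Finset.sum_comm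
  calc 2 * ∑ j ∈ S, (S.filter (fun l => j < l)).card
      = ∑ j ∈ S, ∑ l ∈ S, ((if j < l then 1 else 0) + (if l < j then 1 else 0)) := by
        have h3 : ∑ j ∈ S, ∑ l ∈ S, ((if j < l then 1 else 0) + (if l < j then 1 else 0))
            = (∑ j ∈ S, ∑ l ∈ S, if j < l then 1 else 0)
              + ∑ j ∈ S, ∑ l ∈ S, if l < j then 1 else 0 := by
          rw [← Finset.sum_add_distrib]
          exact Finset.sum_congr rfl fun j _ => Finset.sum_add_distrib
        rw [h3, ← h2, ← h1, two_mul]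
    _ ≤ ∑ _j ∈ S, ∑ _l ∈ S, 1 := by
        refine Finset.sum_le_sum fun j _ => Finset.sum_le_sum fun l _ => ?_
        rcases lt_trichotomy j l with h|h|h <;> simp [h, not_lt.2 h.le]
    _ = S.card ^ 2 := by simp [sq]

lemma pair_lb {α : Type*} [LinearOrder α] (M : Finset α) :
    M.card ≤ 1 + ∑ j ∈ M, (M.filter (fun l => j < l)).card := by
  classical
  rcases M.eq_empty_or_nonempty with h | h
  · simp [h]
  set a := M.max' h with ha
  have key : ∀ j ∈ M.erase a, 1 ≤ (M.filter (fun l => j < l)).card := by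
    intro j hj
    refine Finset.card_pos.2 ⟨a, Finset.mem_filter.2 ⟨M.max'_mem h, ?_⟩⟩
    exact lt_of_le_of_ne (M.le_max' j (Finset.mem_of_mem_erase hj)) (Finset.ne_of_mem_erase hj)
  calc M.card = 1 + (M.erase a).card := by
        rw [add_comm, Finset.card_erase_add_one (M.max'_mem h)]
    _ ≤ 1 + ∑ j ∈ M.erase a, (M.filter (fun l => j < l)).card := by
        have : (M.erase a).card ≤ ∑ j ∈ M.erase a, (M.filter (fun l => j < l)).card := by
          calc (M.erase a).card = ∑ _j ∈ M.erase a, 1 := Finset.card_eq_sum_ones _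
            _ ≤ _ := Finset.sum_le_sum key
        omega
    _ ≤ 1 + ∑ j ∈ M, (M.filter (fun l => j < l)).card := by
        exact Nat.add_le_add_left (Finset.sum_le_sum_of_subset (M.erase_subset a)) 1

lemma sum_indic {n : ℕ} (Sset Hset : Finset (Fin n)) :
    ∑ j ∈ Sset, indic Hset j = ((Sset ∩ Hset).card : ℝ) := by
  simp [indic, Finset.sum_boole, Finset.filter_mem_eq_inter]

lemma pairsum_indic {n : ℕ} (Sset Hset : Finset (Fin n)) :
    ∑ j ∈ Sset, ∑ l ∈ Sset.filter (fun l => j < l), indic Hset j * indic Hset l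
      = ∑ j ∈ Sset ∩ Hset, ((((Sset ∩ Hset).filter (fun l => j < l)).card : ℝ)) := by
  classical
  have inner : ∀ j, ∑ l ∈ Sset.filter (fun l => j < l), indic Hset j * indic Hset l
      = indic Hset j * (((Sset ∩ Hset).filter (fun l => j < l)).card : ℝ) := by
    intro j
    rw [← Finset.mul_sum, sum_indic, Finset.filter_inter]
  rw [Finset.sum_congr rfl fun j _ => inner j]
  calc ∑ j ∈ Sset, indic Hset j * (((Sset ∩ Hset).filter (fun l => j < l)).card : ℝ)
      = ∑ j ∈ Sset, if j ∈ Hset then (((Sset ∩ Hset).filter (fun l => j < l)).card : ℝ) else 0 :=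
        Finset.sum_congr rfl fun j _ => by simp [indic, ite_mul]
    _ = _ := by rw [← Finset.sum_filter, Finset.filter_mem_eq_inter]

lemma int01 {Ω : Type*} [MeasurableSpace Ω] (P : Measure Ω) [IsProbabilityMeasure P]
    (f : Ω → ℝ) (hf : Measurable f) (h01 : ∀ ω, f ω = 0 ∨ f ω = 1) :
    Integrable f P ∧ ∫ ω, f ω ∂P = (P {ω | f ω = 1}).toReal := by
  have hset : MeasurableSet {ω | f ω = 1} := hf (measurableSet_singleton 1)
  have heq : f = Set.indicator {ω | f ω = 1} (fun _ => (1:ℝ)) := by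
    funext ω; rcases h01 ω with h | h <;> simp [Set.indicator, h]
  constructor
  · rw [heq]; exact (integrable_const 1).indicator hset
  · conv_lhs => rw [heq]
    rw [integral_indicator_const _ hset, smul_eq_mul, mul_one, measureReal_def]

lemma Y_le_one {n : ℕ} (Sset Hset : Finset (Fin n)) :
    (∑ j ∈ Sset, indic Hset j)
      - ∑ j ∈ Sset, ∑ l ∈ Sset.filter (fun l => j < l), indic Hset j * indic Hset l ≤ 1 := by
  rw [sum_indic, pairsum_indic]
  have h := pair_lb (Sset ∩ Hset)
  have hc : ((Sset ∩ Hset).card : ℝ)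
      ≤ 1 + ∑ j ∈ Sset ∩ Hset, ((((Sset ∩ Hset).filter (fun l => j < l)).card : ℝ)) := by
    exact_mod_cast h
  linarith

lemma Y_zero {n : ℕ} (Sset Hset : Finset (Fin n)) (h : Sset ∩ Hset = ∅) :
    (∑ j ∈ Sset, indic Hset j)
      - ∑ j ∈ Sset, ∑ l ∈ Sset.filter (fun l => j < l), indic Hset j * indic Hset l = 0 := by
  have hz : ∀ j ∈ Sset, indic Hset j = 0 := by
    intro j hj
    have : j ∉ Hset := fun hH =>
      (Finset.eq_empty_iff_forall_notMem.1 h j) (Finset.mem_inter.2 ⟨hj, hH⟩)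
    simp [indic, this]
  rw [Finset.sum_eq_zero hz, Finset.sum_eq_zero
    (fun j hj => Finset.sum_eq_zero fun l _ => by rw [hz j hj, zero_mul]), sub_zero]

lemma sum_mono_aux {N : ℕ} (F F' : Finset (Fin N)) (hFF : F ⊆ F') (f g : Fin N → ℝ)
    (h1 : ∀ i ∈ F, f i ≤ g i) (h2 : ∀ i ∈ F', 0 ≤ g i) :
    ∑ i ∈ F, f i ≤ ∑ i ∈ F', g i :=
  (Finset.sum_le_sum h1).trans
    (Finset.sum_le_sum_of_subset_of_nonneg hFF (fun i hi _ => h2 i hi))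

set_option maxHeartbeats 2000000 in
/-- Invariant of iterative sampling: for `2 ≤ t ≤ T` and fixed subsets
`H^1,…,H^{t−1}`, if `G^t` is sampled via pairwise independent `{0,1}`-valued
indicators with success probability `q = 4p/T`, then `E[f^t(G^t)] ≤ f^{t−1}(H^{t−1})`. -/
theorem stmt12 {Ω : Type*} [MeasurableSpace Ω] (P : Measure Ω) [IsProbabilityMeasure P]
    (n N : ℕ) (hn : 1 ≤ n)
    (S : Fin N → Finset (Fin n)) (w : Fin N → ℝ)
    (hw : ∀ i, 0 ≤ w i) (hw0 : ∃ i, w i ≠ 0)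
    (p : ℝ) (hp0 : 0 < p) (hp : p ≤ 1 / 2)
    (Δ : ℕ) (hΔ : Δ = Finset.univ.sup (fun i => (S i).card)) (hΔ1 : 1 ≤ Δ)
    (T : ℕ) (hT : T = ⌈8 * p * (Δ : ℝ)⌉₊)
    (q : ℝ) (hq : q = 4 * p / (T : ℝ))
    (τ : ℝ) (hτ : τ = ∑ i, w i * Real.exp (-((S i).card : ℝ) * p))
    (t : ℕ) (ht2 : 2 ≤ t) (htT : t ≤ T)
    (H : ℕ → Finset (Fin n))
    (X : Fin n → Ω → ℝ)
    (hmeas : ∀ j, Measurable (X j))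
    (h01 : ∀ j ω, X j ω = 0 ∨ X j ω = 1)
    (hprob : ∀ j, P {ω | X j ω = 1} = ENNReal.ofReal q)
    (hindep : ∀ j k : Fin n, j ≠ k → IndepFun (X j) (X k) P) :
    ∫ ω, fGen S w p τ T t H (fun j => X j ω) ∂P ≤
      fGen S w p τ T (t - 1) H (indic (H (t - 1))) := by
  classical
  -- numeric facts
  have hT2 : 2 ≤ T := le_trans ht2 htT
  have hTpos : (0:ℝ) < (T:ℝ) := by
    have : 0 < T := lt_of_lt_of_le (by norm_num) hT2
    exact_mod_cast this
  have hq0 : 0 ≤ q := by rw [hq]; positivity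
  have hnpos : (0:ℝ) < (n:ℝ) := by exact_mod_cast hn
  have hτpos : 0 < τ := by
    obtain ⟨i0, hi0⟩ := hw0
    rw [hτ]
    refine Finset.sum_pos' (fun i _ => mul_nonneg (hw i) (Real.exp_pos _).le)
      ⟨i0, Finset.mem_univ _, mul_pos ((hw i0).lt_of_ne (Ne.symm hi0)) (Real.exp_pos _)⟩
  -- expectations
  have hIX : ∀ j, Integrable (X j) P := fun j => (int01 P (X j) (hmeas j) (h01 j)).1
  have hEX : ∀ j, ∫ ω, X j ω ∂P = q := fun j => by
    rw [(int01 P (X j) (hmeas j) (h01 j)).2, hprob j, ENNReal.toReal_ofReal hq0]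
  have h01m : ∀ j l, ∀ ω, X j ω * X l ω = 0 ∨ X j ω * X l ω = 1 := fun j l ω => by
    rcases h01 j ω with h | h <;> rcases h01 l ω with h' | h' <;> simp [h, h']
  have hIXX : ∀ j l, Integrable (fun ω => X j ω * X l ω) P :=
    fun j l => (int01 P _ ((hmeas j).mul (hmeas l)) (h01m j l)).1
  have hEXX : ∀ j l, j ≠ l → ∫ ω, X j ω * X l ω ∂P = q * q := by
    intro j l hjl
    rw [(int01 P (fun ω => X j ω * X l ω) ((hmeas j).mul (hmeas l)) (h01m j l)).2]
    have hseteq : {ω | X j ω * X l ω = 1} = X j ⁻¹' {1} ∩ X l ⁻¹' {1} := by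
      ext ω
      rcases h01 j ω with h | h <;> rcases h01 l ω with h' | h' <;> simp [h, h']
    rw [hseteq, (hindep j l hjl).measure_inter_preimage_eq_mul {1} {1}
      (measurableSet_singleton 1) (measurableSet_singleton 1)]
    have e1 : X j ⁻¹' {1} = {ω | X j ω = 1} := by ext ω; simp
    have e2 : X l ⁻¹' {1} = {ω | X l ω = 1} := by ext ω; simp
    rw [e1, e2, hprob j, hprob l, ENNReal.toReal_mul, ENNReal.toReal_ofReal hq0]
  -- integrability of the Y expressions
  have hIY : ∀ i : Fin N, Integrable (fun ω => ∑ j ∈ S i, X j ω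
      - ∑ j ∈ S i, ∑ l ∈ (S i).filter (fun l => j < l), X j ω * X l ω) P := by
    intro i
    exact (integrable_finset_sum _ fun j _ => hIX j).sub
      (integrable_finset_sum _ fun j _ => integrable_finset_sum _ fun l _ => hIXX j l)
  have hEY : ∀ i : Fin N, ∫ ω, (∑ j ∈ S i, X j ω
      - ∑ j ∈ S i, ∑ l ∈ (S i).filter (fun l => j < l), X j ω * X l ω) ∂P
      = ((S i).card : ℝ) * q
        - (∑ j ∈ S i, (((S i).filter (fun l => j < l)).card : ℝ)) * q ^ 2 := by
    intro i
    rw [integral_sub (integrable_finset_sum _ fun j _ => hIX j)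
      (integrable_finset_sum _ fun j _ => integrable_finset_sum _ fun l _ => hIXX j l),
      integral_finset_sum _ (fun j _ => hIX j),
      integral_finset_sum _ (fun j _ => integrable_finset_sum _ fun l _ => hIXX j l)]
    congr 1
    · rw [Finset.sum_congr rfl fun j _ => hEX j, Finset.sum_const, nsmul_eq_mul]
    · rw [Finset.sum_congr rfl fun j _ => integral_finset_sum _ fun l _ => hIXX j l]
      rw [Finset.sum_congr rfl fun j _ => Finset.sum_congr rfl fun l hl =>
        hEXX j l (ne_of_lt (Finset.mem_filter.1 hl).2)]
      rw [Finset.sum_mul]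
      exact Finset.sum_congr rfl fun j _ => by
        rw [Finset.sum_const, nsmul_eq_mul]; ring
  have hcast : ((T - (t - 1) : ℕ) : ℝ) = ((T - t : ℕ) : ℝ) + 1 := by
    have h : T - (t - 1) = (T - t) + 1 := by omega
    rw [h]; push_cast; ring
  have hLHS : ∀ F : Finset (Fin N),
      ∫ ω, ((∑ i ∈ F,
          (1 - (∑ j ∈ S i, X j ω
            - ∑ j ∈ S i, ∑ l ∈ (S i).filter (fun l => j < l), X j ω * X l ω)) *
            w i * Real.exp (-((S i).card : ℝ) * ((T - t : ℕ) : ℝ) * p / (T : ℝ))) / τ +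
        ((∑ j, X j ω) + (∑ j ∈ Finset.Icc 1 (t - 1), ((H j).card : ℝ)) +
          4 * (n : ℝ) * ((T - t : ℕ) : ℝ) * p / (T : ℝ)) / (4 * (n : ℝ) * p)) ∂P
      = (∑ i ∈ F,
          (1 - (((S i).card : ℝ) * q
            - (∑ j ∈ S i, (((S i).filter (fun l => j < l)).card : ℝ)) * q ^ 2)) *
            w i * Real.exp (-((S i).card : ℝ) * ((T - t : ℕ) : ℝ) * p / (T : ℝ))) / τ +
        ((n : ℝ) * q + (∑ j ∈ Finset.Icc 1 (t - 1), ((H j).card : ℝ)) +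
          4 * (n : ℝ) * ((T - t : ℕ) : ℝ) * p / (T : ℝ)) / (4 * (n : ℝ) * p) := by
    intro F
    have hInt1 : Integrable (fun ω => ∑ i ∈ F,
        (1 - (∑ j ∈ S i, X j ω
          - ∑ j ∈ S i, ∑ l ∈ (S i).filter (fun l => j < l), X j ω * X l ω)) *
          w i * Real.exp (-((S i).card : ℝ) * ((T - t : ℕ) : ℝ) * p / (T : ℝ))) P :=
      integrable_finset_sum _ fun i _ =>
        (((integrable_const (1:ℝ)).sub (hIY i)).mul_const _).mul_const _
    have hInt2 : Integrable (fun ω => (∑ j, X j ω)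
        + (∑ j ∈ Finset.Icc 1 (t - 1), ((H j).card : ℝ))
        + 4 * (n : ℝ) * ((T - t : ℕ) : ℝ) * p / (T : ℝ)) P :=
      ((integrable_finset_sum _ fun j _ => hIX j).add (integrable_const _)).add
        (integrable_const _)
    have hterm : ∀ i : Fin N, Integrable (fun ω =>
        (1 - (∑ j ∈ S i, X j ω
          - ∑ j ∈ S i, ∑ l ∈ (S i).filter (fun l => j < l), X j ω * X l ω)) *
          w i * Real.exp (-((S i).card : ℝ) * ((T - t : ℕ) : ℝ) * p / (T : ℝ))) P :=
      fun i => (((integrable_const (1:ℝ)).sub (hIY i)).mul_const _).mul_const _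
    have hInt3 : Integrable (fun ω => (∑ j, X j ω)
        + (∑ j ∈ Finset.Icc 1 (t - 1), ((H j).card : ℝ))) P :=
      (integrable_finset_sum _ fun j _ => hIX j).add (integrable_const _)
    have hsub : ∀ i : Fin N, Integrable (fun ω => (1:ℝ) - (∑ j ∈ S i, X j ω
        - ∑ j ∈ S i, ∑ l ∈ (S i).filter (fun l => j < l), X j ω * X l ω)) P :=
      fun i => (integrable_const (1:ℝ)).sub (hIY i)
    rw [integral_add (hInt1.div_const τ) (hInt2.div_const _), integral_div, integral_div,
      integral_finset_sum _ (fun i _ => hterm i),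
      integral_add hInt3 (integrable_const _),
      integral_add (integrable_finset_sum _ fun j _ => hIX j) (integrable_const _),
      integral_finset_sum _ (fun j _ => hIX j)]
    congr 1
    · congr 1
      refine Finset.sum_congr rfl fun i _ => ?_
      rw [integral_mul_const, integral_mul_const,
        integral_sub (integrable_const (1:ℝ)) (hIY i), integral_const, probReal_univ,
        one_smul, hEY i]
    · simp only [integral_const, probReal_univ, one_smul]
      rw [Finset.sum_congr rfl fun j _ => hEX j, Finset.sum_const, Finset.card_univ,
        Fintype.card_fin, nsmul_eq_mul]
  simp only [fGen]
  rw [hLHS]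
  apply add_le_add
  · -- first summand
    rw [div_le_div_iff_of_pos_right hτpos]
    refine sum_mono_aux _ _ ?_ _ _ ?_ ?_
    · -- subset
      intro x hx
      simp only [Finset.mem_filter] at hx ⊢
      exact ⟨hx.1, fun j hj => hx.2 j (Finset.Icc_subset_Icc_right (by omega) hj)⟩
    · -- termwise on the smaller filter
      intro i hi
      simp only [Finset.mem_filter] at hi
      have hdisj : S i ∩ H (t - 1) = ∅ :=
        hi.2 (t - 1) (Finset.mem_Icc.2 ⟨by omega, le_refl _⟩)
      have hY0 := Y_zero (S i) (H (t - 1)) hdisj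
      rw [hY0, sub_zero, hcast]
      have hs0 : (0:ℝ) ≤ ((S i).card : ℝ) := Nat.cast_nonneg _
      have hsΔ : ((S i).card : ℝ) ≤ (Δ : ℝ) := by
        have : (S i).card ≤ Δ := hΔ ▸ Finset.le_sup (f := fun i => (S i).card) (Finset.mem_univ i)
        exact_mod_cast this
      have hT8 : 8 * p * (Δ:ℝ) ≤ (T:ℝ) := hT ▸ Nat.le_ceil _
      have h8 : 8 * ((S i).card:ℝ) * p ≤ (T:ℝ) := by
        have hm : 0 ≤ ((Δ:ℝ) - ((S i).card:ℝ)) * p :=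
          mul_nonneg (by linarith) hp0.le
        nlinarith [hm, hT8]
      have hcnt : (∑ j ∈ S i, (((S i).filter (fun l => j < l)).card : ℝ)) * 2
          ≤ ((S i).card : ℝ)^2 := by
        have h0 := pair_ub (S i)
        have h2 : ((2 * ∑ j ∈ S i, ((S i).filter (fun l => j < l)).card : ℕ) : ℝ)
            ≤ (((S i).card ^ 2 : ℕ) : ℝ) := by exact_mod_cast h0
        push_cast at h2
        linarith
      have hcnt0 : 0 ≤ ∑ j ∈ S i, (((S i).filter (fun l => j < l)).card : ℝ) :=
        Finset.sum_nonneg fun j _ => Nat.cast_nonneg _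
      have key : 1 - (((S i).card:ℝ) * q
          - (∑ j ∈ S i, (((S i).filter (fun l => j < l)).card : ℝ)) * q ^ 2)
          ≤ Real.exp (-(((S i).card:ℝ) * p / (T:ℝ))) := by
        have hexp := Real.add_one_le_exp (-(((S i).card:ℝ) * p / (T:ℝ)))
        have hu0 : 0 ≤ ((S i).card:ℝ) * p := mul_nonneg hs0 hp0.le
        have hu0' : 0 ≤ ((S i).card:ℝ) * p / (T:ℝ) := div_nonneg hu0 hTpos.le
        have h1 : (∑ j ∈ S i, (((S i).filter (fun l => j < l)).card : ℝ)) * q ^ 2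
            ≤ (((S i).card:ℝ)^2 / 2) * q ^ 2 := by
          have hm : 0 ≤ (((S i).card:ℝ)^2
              - 2 * ∑ j ∈ S i, (((S i).filter (fun l => j < l)).card : ℝ)) * q ^ 2 :=
            mul_nonneg (by linarith) (sq_nonneg q)
          nlinarith [hm]
        have h2 : (((S i).card:ℝ)^2 / 2) * q ^ 2
            = 8 * (((S i).card:ℝ) * p / (T:ℝ))^2 := by
          rw [hq]; field_simp; ring
        have h3 : 8 * (((S i).card:ℝ) * p / (T:ℝ))^2 ≤ ((S i).card:ℝ) * p / (T:ℝ) := by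
          have hu : ((S i).card:ℝ) * p / (T:ℝ) ≤ 1/8 := by
            rw [div_le_iff₀ hTpos]; linarith
          have hm : 0 ≤ (((S i).card:ℝ) * p / (T:ℝ)) * (1/8 - ((S i).card:ℝ) * p / (T:ℝ)) :=
            mul_nonneg hu0' (by linarith)
          nlinarith [hm]
        have h4 : ((S i).card:ℝ) * q = 4 * (((S i).card:ℝ) * p / (T:ℝ)) := by
          rw [hq]; field_simp
        rw [h4]
        linarith
      have hwe : 0 ≤ w i * Real.exp (-((S i).card:ℝ) * ((T - t : ℕ):ℝ) * p / (T:ℝ)) :=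
        mul_nonneg (hw i) (Real.exp_pos _).le
      have hsplit : -((S i).card:ℝ) * (((T - t : ℕ):ℝ) + 1) * p / (T:ℝ)
          = -((S i).card:ℝ) * ((T - t : ℕ):ℝ) * p / (T:ℝ)
            + (-(((S i).card:ℝ) * p / (T:ℝ))) := by ring
      rw [hsplit, Real.exp_add]
      nlinarith [mul_le_mul_of_nonneg_right key hwe]
    · -- nonnegativity of the extra terms
      intro i hi
      have h1 := Y_le_one (S i) (H (t - 1))
      have h2 : 0 ≤ 1 - (∑ j ∈ S i, indic (H (t - 1)) j
          - ∑ j ∈ S i, ∑ l ∈ (S i).filter (fun l => j < l),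
              indic (H (t - 1)) j * indic (H (t - 1)) l) := by linarith
      exact mul_nonneg (mul_nonneg h2 (hw i)) (Real.exp_pos _).le
  · -- second summand
    apply le_of_eq
    have h1 : ∑ j, indic (H (t - 1)) j = ((H (t - 1)).card : ℝ) := by
      rw [sum_indic Finset.univ (H (t - 1)), Finset.univ_inter]
    have h2 : ∑ j ∈ Finset.Icc 1 (t - 1), ((H j).card : ℝ)
        = (∑ j ∈ Finset.Icc 1 (t - 1 - 1), ((H j).card : ℝ)) + ((H (t - 1)).card : ℝ) := by
      have e : t - 1 = (t - 1 - 1) + 1 := by omega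
      conv_lhs => rw [e]
      rw [Finset.sum_Icc_succ_top (by omega : 1 ≤ t - 1 - 1 + 1), ← e]
    rw [h1, h2, hcast, hq]
    congr 1
    field_simp
    ring
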